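/- Let f = (f₀, f₁, f₂): (0,1] → ℝ × ℂ × ℂ be continuous with |f(r)| = 1 for all r, and suppose ∫₀¹ (|f′|² + (|f₁|² + 4|f₂|²)/r²) r dr < ∞ with f absolutely continuous. Then f₁(r) → 0 and f₂(r) → 0 as r → 0⁺, and f₀(r) converges to either 1 or −1 as r → 0⁺. In particular f extends continuously to [0,1] with f(0) = (±1, 0, 0). -/

import Mathlib

open MeasureTheory Filter Set

private lemma amgm_aux (x y r : ℝ) (hr : 0 < r) : 2 * (x * y) ≤ x ^ 2 / r + y ^ 2 * r := by
  have h : x ^ 2 / r + y ^ 2 * r - 2 * (x * y) = (x - y * r) ^ 2 / r := by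
    field_simp; ring
  nlinarith [div_nonneg (sq_nonneg (x - y * r)) hr.le]

/-- Key auxiliary lemma: if `g` has a derivative `g'` on `(0,1]` and a nonnegative
integrable majorant `M` dominates both `2‖g‖‖g'‖` and `‖g‖²/r`, then `‖g‖² → 0` at `0⁺`. -/
private lemma sq_norm_tendsto_zero (g g' : ℝ → ℂ) (M : ℝ → ℝ)
    (hderiv : ∀ r ∈ Set.Ioc (0 : ℝ) 1, HasDerivAt g (g' r) r)
    (hMint : IntegrableOn M (Set.Ioc 0 1))
    (hM0 : ∀ r ∈ Set.Ioc (0 : ℝ) 1, 0 ≤ M r)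
    (hb1 : ∀ r ∈ Set.Ioc (0 : ℝ) 1, 2 * (‖g r‖ * ‖g' r‖) ≤ M r)
    (hb2 : ∀ r ∈ Set.Ioc (0 : ℝ) 1, ‖g r‖ ^ 2 / r ≤ M r) :
    Tendsto (fun r => ‖g r‖ ^ 2) (nhdsWithin 0 (Set.Ioi 0)) (nhds 0) := by
  set h : ℝ → ℝ := fun r => ‖g r‖ ^ 2 with hh
  set φ : ℝ → ℝ := fun r => @inner ℝ _ _ (g r) (g' r) + @inner ℝ _ _ (g' r) (g r) with hφ
  -- h has derivative φ on Ioc 0 1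
  have hd : ∀ r ∈ Set.Ioc (0 : ℝ) 1, HasDerivAt h (φ r) r := by
    intro r hr
    have := (hderiv r hr).inner ℝ (hderiv r hr)
    simpa [hh, hφ, real_inner_self_eq_norm_sq] using this
  -- pointwise bound on φ
  have hφb : ∀ r ∈ Set.Ioc (0 : ℝ) 1, |φ r| ≤ M r := by
    intro r hr
    have h1 : |@inner ℝ _ _ (g r) (g' r)| ≤ ‖g r‖ * ‖g' r‖ := abs_real_inner_le_norm _ _
    have h2 : |@inner ℝ _ _ (g' r) (g r)| ≤ ‖g r‖ * ‖g' r‖ := by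
      rw [real_inner_comm]; exact abs_real_inner_le_norm _ _
    calc |φ r| ≤ |@inner ℝ _ _ (g r) (g' r)| + |@inner ℝ _ _ (g' r) (g r)| := abs_add_le _ _
      _ ≤ 2 * (‖g r‖ * ‖g' r‖) := by linarith
      _ ≤ M r := hb1 r hr
  -- measurability of φ on Ioc 0 1
  have hφmeas : AEStronglyMeasurable φ (volume.restrict (Set.Ioc (0:ℝ) 1)) := by
    have : ∀ r ∈ Set.Ioc (0 : ℝ) 1, deriv h r = φ r := fun r hr => (hd r hr).deriv
    exact ((measurable_deriv h).aestronglyMeasurable).congr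
      ((ae_restrict_iff' measurableSet_Ioc).mpr (ae_of_all _ this))
  -- integrability of φ on Ioc 0 1
  have hφint : IntegrableOn φ (Set.Ioc (0:ℝ) 1) := by
    refine Integrable.mono' hMint hφmeas ?_
    refine (ae_restrict_iff' measurableSet_Ioc).mpr (ae_of_all _ ?_)
    intro r hr
    simpa [Real.norm_eq_abs] using hφb r hr
  -- FTC estimate
  have key : ∀ δ, δ ∈ Set.Ioc (0:ℝ) 1 → ∀ x y : ℝ, 0 < x → x ≤ y → y ≤ δ →
      |h y - h x| ≤ ∫ r in Set.Ioc (0:ℝ) δ, M r := by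
    intro δ hδ x y hx hxy hyδ
    have hsub : Set.Icc x y ⊆ Set.Ioc (0:ℝ) 1 := fun t ht =>
      ⟨lt_of_lt_of_le hx ht.1, le_trans ht.2 (le_trans hyδ hδ.2)⟩
    have hsub' : Set.Ioc x y ⊆ Set.Ioc (0:ℝ) 1 := fun t ht =>
      ⟨lt_trans hx ht.1, le_trans ht.2 (le_trans hyδ hδ.2)⟩
    have hsubδ : Set.Ioc x y ⊆ Set.Ioc (0:ℝ) δ := fun t ht => ⟨lt_trans hx ht.1, le_trans ht.2 hyδ⟩
    have hφi : IntervalIntegrable φ volume x y := by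
      rw [intervalIntegrable_iff_integrableOn_Ioc_of_le hxy]
      exact hφint.mono_set hsub'
    have hMi : IntervalIntegrable M volume x y := by
      rw [intervalIntegrable_iff_integrableOn_Ioc_of_le hxy]
      exact hMint.mono_set hsub'
    have hftc : ∫ r in x..y, φ r = h y - h x := by
      refine intervalIntegral.integral_eq_sub_of_hasDerivAt (fun t ht => ?_) hφi
      rw [Set.uIcc_of_le hxy] at ht
      exact hd t (hsub ht)
    rw [← hftc]
    calc |∫ r in x..y, φ r| ≤ ∫ r in x..y, |φ r| :=
          intervalIntegral.abs_integral_le_integral_abs hxy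
      _ ≤ ∫ r in x..y, M r := by
          refine intervalIntegral.integral_mono_on hxy hφi.abs hMi ?_
          intro t ht; exact hφb t (hsub ht)
      _ = ∫ r in Set.Ioc x y, M r := by
          rw [intervalIntegral.integral_of_le hxy]
      _ ≤ ∫ r in Set.Ioc (0:ℝ) δ, M r := by
          refine setIntegral_mono_set (hMint.mono_set (Set.Ioc_subset_Ioc_right hδ.2)) ?_
            (HasSubset.Subset.eventuallyLE hsubδ)
          refine (ae_restrict_iff' measurableSet_Ioc).mpr (ae_of_all _ ?_)
          intro r hr; exact hM0 r ⟨hr.1, le_trans hr.2 hδ.2⟩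
  -- tail of the integral of M goes to 0
  have tail : ∀ ε > (0:ℝ), ∃ δ ∈ Set.Ioc (0:ℝ) 1, ∫ r in Set.Ioc (0:ℝ) δ, M r < ε := by
    intro ε hε
    have hsm : ∀ n : ℕ, MeasurableSet (Set.Ioc (1/(n+1) : ℝ) 1) := fun n => measurableSet_Ioc
    have hmono : Monotone (fun n : ℕ => Set.Ioc (1/(n+1) : ℝ) 1) := by
      intro m n hmn
      exact Set.Ioc_subset_Ioc_left (one_div_le_one_div_of_le (by positivity)
        (by exact_mod_cast Nat.succ_le_succ hmn))
    have hunion : (⋃ n : ℕ, Set.Ioc (1/(n+1) : ℝ) 1) = Set.Ioc (0:ℝ) 1 := by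
      ext x
      simp only [Set.mem_iUnion, Set.mem_Ioc]
      constructor
      · rintro ⟨n, h1, h2⟩
        exact ⟨lt_trans (by positivity) h1, h2⟩
      · rintro ⟨h1, h2⟩
        obtain ⟨n, hn⟩ := exists_nat_one_div_lt h1
        exact ⟨n, hn, h2⟩
    have := tendsto_setIntegral_of_monotone hsm hmono (by rw [hunion]; exact hMint)
    rw [hunion] at this
    have hev := this.eventually (eventually_abs_sub_lt (∫ r in Set.Ioc (0:ℝ) 1, M r) hε)
    obtain ⟨n, hn⟩ := hev.exists
    set δ : ℝ := 1/(n+1) with hδdef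
    have hδ0 : 0 < δ := by positivity
    have hδ1 : δ ≤ 1 := by
      rw [hδdef]; rw [div_le_one (by positivity)]
      have : (1:ℝ) ≤ n + 1 := by exact_mod_cast Nat.succ_le_succ (Nat.zero_le n)
      linarith
    refine ⟨δ, ⟨hδ0, hδ1⟩, ?_⟩
    have hsplit : ∫ r in Set.Ioc (0:ℝ) 1, M r
        = (∫ r in Set.Ioc (0:ℝ) δ, M r) + ∫ r in Set.Ioc δ 1, M r := by
      rw [← setIntegral_union (Set.Ioc_disjoint_Ioc_of_le le_rfl) measurableSet_Ioc
        (hMint.mono_set (Set.Ioc_subset_Ioc_right hδ1))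
        (hMint.mono_set (Set.Ioc_subset_Ioc_left hδ0.le)),
        Set.Ioc_union_Ioc_eq_Ioc hδ0.le hδ1]
    have habs : |(∫ r in Set.Ioc δ 1, M r) - ∫ r in Set.Ioc (0:ℝ) 1, M r| < ε := hn
    have := abs_lt.mp habs
    linarith [this.1, this.2]
  -- liminf step: h gets small somewhere near 0
  have small : ∀ δ, δ ∈ Set.Ioc (0:ℝ) 1 → ∀ c > (0:ℝ), ∃ a ∈ Set.Ioc (0:ℝ) δ, h a < c := by
    intro δ hδ c hc
    by_contra hcon
    push_neg at hcon
    -- then c / r ≤ M r on Ioc 0 δ, so r⁻¹ is integrable on Ioc 0 δ : contradiction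
    have hbound : ∀ r ∈ Set.Ioc (0:ℝ) δ, ‖c * r⁻¹‖ ≤ M r := by
      intro r hr
      have hr1 : r ∈ Set.Ioc (0:ℝ) 1 := ⟨hr.1, le_trans hr.2 hδ.2⟩
      have h1 : c / r ≤ h r / r := (div_le_div_iff_of_pos_right hr.1).mpr (hcon r hr)
      have h2 : h r / r ≤ M r := hb2 r hr1
      have : 0 < c * r⁻¹ := mul_pos hc (inv_pos.mpr hr.1)
      rw [Real.norm_eq_abs, abs_of_pos this]
      calc c * r⁻¹ = c / r := by ring
        _ ≤ M r := le_trans h1 h2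
    have hint : IntegrableOn (fun r => c * r⁻¹) (Set.Ioc (0:ℝ) δ) := by
      refine Integrable.mono' (hMint.mono_set (Set.Ioc_subset_Ioc_right hδ.2)) ?_ ?_
      · exact (measurable_const.mul measurable_inv).aestronglyMeasurable
      · exact (ae_restrict_iff' measurableSet_Ioc).mpr (ae_of_all _ hbound)
    have hinv : IntegrableOn (fun r : ℝ => r⁻¹) (Set.Ioc (0:ℝ) δ) := by
      have h2 := hint.const_mul c⁻¹
      refine IntegrableOn.congr_fun h2 (fun x _ => ?_) measurableSet_Ioc
      field_simp
    have : IntervalIntegrable (fun r : ℝ => r⁻¹) volume 0 δ := by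
      rw [intervalIntegrable_iff, Set.uIoc_of_le hδ.1.le]
      exact hinv
    rw [intervalIntegrable_inv_iff] at this
    rcases this with h | h
    · exact absurd h.symm (ne_of_gt hδ.1)
    · exact h (by rw [Set.uIcc_of_le hδ.1.le]; exact ⟨le_refl 0, hδ.1.le⟩)
  -- conclude
  rw [Metric.tendsto_nhdsWithin_nhds]
  intro ε hε
  obtain ⟨δ₀, hδ₀, hδ₀int⟩ := tail (ε/2) (by linarith)
  obtain ⟨a, ha, hha⟩ := small δ₀ hδ₀ (ε/2) (by linarith)
  refine ⟨a, ha.1, ?_⟩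
  intro b hb hdist
  rw [Real.dist_eq, sub_zero, abs_of_pos hb] at hdist
  rw [Real.dist_eq, sub_zero]
  have hb' : 0 < b := hb
  have hba : b ≤ a := hdist.le
  have := key δ₀ hδ₀ b a hb' hba ha.2
  have hnn : 0 ≤ h b := by positivity
  rw [abs_of_nonneg hnn]
  have := abs_le.mp this
  linarith [this.1, this.2]

/-- Let `f = (f₀, f₁, f₂) : (0,1] → ℝ × ℂ × ℂ` be continuous of unit norm, absolutely
continuous (here: differentiable with derivatives `f₀', f₁', f₂'`), with finite energy
`∫₀¹ (|f′|² + (|f₁|² + 4|f₂|²)/r²) r dr < ∞`.  Then `f₁(r) → 0`, `f₂(r) → 0` as `r → 0⁺`,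
and `f₀(r)` converges to either `1` or `−1` as `r → 0⁺`. -/
theorem equivariant_continuity_at_origin
    (f₀ f₀' : ℝ → ℝ) (f₁ f₁' f₂ f₂' : ℝ → ℂ)
    (hcont₀ : ContinuousOn f₀ (Set.Ioc (0 : ℝ) 1))
    (hcont₁ : ContinuousOn f₁ (Set.Ioc (0 : ℝ) 1))
    (hcont₂ : ContinuousOn f₂ (Set.Ioc (0 : ℝ) 1))
    (hnorm : ∀ r ∈ Set.Ioc (0 : ℝ) 1, (f₀ r) ^ 2 + ‖f₁ r‖ ^ 2 + ‖f₂ r‖ ^ 2 = 1)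
    (hderiv₀ : ∀ r ∈ Set.Ioc (0 : ℝ) 1, HasDerivAt f₀ (f₀' r) r)
    (hderiv₁ : ∀ r ∈ Set.Ioc (0 : ℝ) 1, HasDerivAt f₁ (f₁' r) r)
    (hderiv₂ : ∀ r ∈ Set.Ioc (0 : ℝ) 1, HasDerivAt f₂ (f₂' r) r)
    (hint : IntegrableOn
      (fun r => ((f₀' r) ^ 2 + ‖f₁' r‖ ^ 2 + ‖f₂' r‖ ^ 2
        + (‖f₁ r‖ ^ 2 + 4 * ‖f₂ r‖ ^ 2) / r ^ 2) * r) (Set.Ioc 0 1)) :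
    Tendsto f₁ (nhdsWithin 0 (Set.Ioi 0)) (nhds 0) ∧
    Tendsto f₂ (nhdsWithin 0 (Set.Ioi 0)) (nhds 0) ∧
    (Tendsto f₀ (nhdsWithin 0 (Set.Ioi 0)) (nhds 1) ∨
      Tendsto f₀ (nhdsWithin 0 (Set.Ioi 0)) (nhds (-1))) := by
  set M : ℝ → ℝ := fun r => ((f₀' r) ^ 2 + ‖f₁' r‖ ^ 2 + ‖f₂' r‖ ^ 2
        + (‖f₁ r‖ ^ 2 + 4 * ‖f₂ r‖ ^ 2) / r ^ 2) * r with hM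
  -- expand M at points of Ioc 0 1
  have hMexp : ∀ r ∈ Set.Ioc (0:ℝ) 1, M r = (f₀' r) ^ 2 * r + ‖f₁' r‖ ^ 2 * r
      + ‖f₂' r‖ ^ 2 * r + ‖f₁ r‖ ^ 2 / r + 4 * ‖f₂ r‖ ^ 2 / r := by
    intro r hr
    have hr0 : r ≠ 0 := ne_of_gt hr.1
    simp only [hM]
    field_simp
    ring
  have hM0 : ∀ r ∈ Set.Ioc (0:ℝ) 1, 0 ≤ M r := by
    intro r hr
    rw [hMexp r hr]
    have h1 : 0 ≤ (f₀' r) ^ 2 * r := mul_nonneg (sq_nonneg _) hr.1.le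
    have h2 : 0 ≤ ‖f₁' r‖ ^ 2 * r := mul_nonneg (sq_nonneg _) hr.1.le
    have h3 : 0 ≤ ‖f₂' r‖ ^ 2 * r := mul_nonneg (sq_nonneg _) hr.1.le
    have h4 : 0 ≤ ‖f₁ r‖ ^ 2 / r := div_nonneg (sq_nonneg _) hr.1.le
    have h5 : 0 ≤ 4 * ‖f₂ r‖ ^ 2 / r := div_nonneg (by positivity) hr.1.le
    linarith
  -- bounds for f₁
  have hb11 : ∀ r ∈ Set.Ioc (0:ℝ) 1, 2 * (‖f₁ r‖ * ‖f₁' r‖) ≤ M r := by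
    intro r hr
    have := amgm_aux (‖f₁ r‖) (‖f₁' r‖) r hr.1
    rw [hMexp r hr]
    have h1 : 0 ≤ (f₀' r) ^ 2 * r := mul_nonneg (sq_nonneg _) hr.1.le
    have h3 : 0 ≤ ‖f₂' r‖ ^ 2 * r := mul_nonneg (sq_nonneg _) hr.1.le
    have h5 : 0 ≤ 4 * ‖f₂ r‖ ^ 2 / r := div_nonneg (by positivity) hr.1.le
    linarith
  have hb12 : ∀ r ∈ Set.Ioc (0:ℝ) 1, ‖f₁ r‖ ^ 2 / r ≤ M r := by
    intro r hr
    rw [hMexp r hr]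
    have h1 : 0 ≤ (f₀' r) ^ 2 * r := mul_nonneg (sq_nonneg _) hr.1.le
    have h2 : 0 ≤ ‖f₁' r‖ ^ 2 * r := mul_nonneg (sq_nonneg _) hr.1.le
    have h3 : 0 ≤ ‖f₂' r‖ ^ 2 * r := mul_nonneg (sq_nonneg _) hr.1.le
    have h5 : 0 ≤ 4 * ‖f₂ r‖ ^ 2 / r := div_nonneg (by positivity) hr.1.le
    linarith
  -- bounds for f₂
  have hb21 : ∀ r ∈ Set.Ioc (0:ℝ) 1, 2 * (‖f₂ r‖ * ‖f₂' r‖) ≤ M r := by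
    intro r hr
    have := amgm_aux (‖f₂ r‖) (‖f₂' r‖) r hr.1
    rw [hMexp r hr]
    have h1 : 0 ≤ (f₀' r) ^ 2 * r := mul_nonneg (sq_nonneg _) hr.1.le
    have h2 : 0 ≤ ‖f₁' r‖ ^ 2 * r := mul_nonneg (sq_nonneg _) hr.1.le
    have h4 : 0 ≤ ‖f₁ r‖ ^ 2 / r := div_nonneg (sq_nonneg _) hr.1.le
    have h6 : 0 ≤ 3 * ‖f₂ r‖ ^ 2 / r := div_nonneg (by positivity) hr.1.le
    have h7 : 4 * ‖f₂ r‖ ^ 2 / r = ‖f₂ r‖ ^ 2 / r + 3 * ‖f₂ r‖ ^ 2 / r := by ring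
    linarith
  have hb22 : ∀ r ∈ Set.Ioc (0:ℝ) 1, ‖f₂ r‖ ^ 2 / r ≤ M r := by
    intro r hr
    rw [hMexp r hr]
    have h1 : 0 ≤ (f₀' r) ^ 2 * r := mul_nonneg (sq_nonneg _) hr.1.le
    have h2 : 0 ≤ ‖f₁' r‖ ^ 2 * r := mul_nonneg (sq_nonneg _) hr.1.le
    have h3 : 0 ≤ ‖f₂' r‖ ^ 2 * r := mul_nonneg (sq_nonneg _) hr.1.le
    have h4 : 0 ≤ ‖f₁ r‖ ^ 2 / r := div_nonneg (sq_nonneg _) hr.1.le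
    have h6 : 0 ≤ 3 * ‖f₂ r‖ ^ 2 / r := div_nonneg (by positivity) hr.1.le
    have h7 : 4 * ‖f₂ r‖ ^ 2 / r = ‖f₂ r‖ ^ 2 / r + 3 * ‖f₂ r‖ ^ 2 / r := by ring
    linarith
  -- squared norms tendsto zero
  have hsq1 : Tendsto (fun r => ‖f₁ r‖ ^ 2) (nhdsWithin 0 (Set.Ioi 0)) (nhds 0) :=
    sq_norm_tendsto_zero f₁ f₁' M hderiv₁ hint hM0 hb11 hb12
  have hsq2 : Tendsto (fun r => ‖f₂ r‖ ^ 2) (nhdsWithin 0 (Set.Ioi 0)) (nhds 0) :=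
    sq_norm_tendsto_zero f₂ f₂' M hderiv₂ hint hM0 hb21 hb22
  -- f₁ → 0 and f₂ → 0
  have hn1 : Tendsto (fun r => ‖f₁ r‖) (nhdsWithin 0 (Set.Ioi 0)) (nhds 0) := by
    have := (Real.continuous_sqrt.tendsto 0).comp hsq1
    rw [Real.sqrt_zero] at this
    refine this.congr fun r => ?_
    simp [Real.sqrt_sq (norm_nonneg _)]
  have hn2 : Tendsto (fun r => ‖f₂ r‖) (nhdsWithin 0 (Set.Ioi 0)) (nhds 0) := by
    have := (Real.continuous_sqrt.tendsto 0).comp hsq2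
    rw [Real.sqrt_zero] at this
    refine this.congr fun r => ?_
    simp [Real.sqrt_sq (norm_nonneg _)]
  have ht1 : Tendsto f₁ (nhdsWithin 0 (Set.Ioi 0)) (nhds 0) :=
    tendsto_zero_iff_norm_tendsto_zero.mpr hn1
  have ht2 : Tendsto f₂ (nhdsWithin 0 (Set.Ioi 0)) (nhds 0) :=
    tendsto_zero_iff_norm_tendsto_zero.mpr hn2
  refine ⟨ht1, ht2, ?_⟩
  -- f₀² → 1
  have hIoc_mem : Set.Ioc (0:ℝ) 1 ∈ nhdsWithin (0:ℝ) (Set.Ioi 0) :=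
    Ioc_mem_nhdsGT_of_mem (by constructor <;> norm_num)
  have hsq0 : Tendsto (fun r => (f₀ r) ^ 2) (nhdsWithin 0 (Set.Ioi 0)) (nhds 1) := by
    have h : Tendsto (fun r => 1 - ‖f₁ r‖ ^ 2 - ‖f₂ r‖ ^ 2)
        (nhdsWithin 0 (Set.Ioi 0)) (nhds 1) := by
      have h0 : Tendsto (fun _ : ℝ => (1:ℝ)) (nhdsWithin 0 (Set.Ioi 0)) (nhds 1) :=
        tendsto_const_nhds
      have := (h0.sub hsq1).sub hsq2
      simpa using this
    refine h.congr' ?_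
    filter_upwards [hIoc_mem] with r hr
    have := hnorm r hr
    linarith
  -- |f₀| → 1
  have habs : Tendsto (fun r => |f₀ r|) (nhdsWithin 0 (Set.Ioi 0)) (nhds 1) := by
    have := (Real.continuous_sqrt.tendsto 1).comp hsq0
    rw [Real.sqrt_one] at this
    refine this.congr fun r => ?_
    simp [Real.sqrt_sq_eq_abs]
  -- eventually |f₀| > 1/2
  have hev : ∀ᶠ r in nhdsWithin (0:ℝ) (Set.Ioi 0), (1:ℝ)/2 < |f₀ r| :=
    habs.eventually (eventually_gt_nhds (by norm_num))
  obtain ⟨ε, hε, hIoo⟩ := mem_nhdsGT_iff_exists_Ioo_subset.mp (hev.and hIoc_mem)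
  have hεpos : 0 < ε := hε
  have hIoo1 : ∀ r ∈ Set.Ioo (0:ℝ) ε, (1:ℝ)/2 < |f₀ r| := fun r hr => (hIoo hr).1
  have hIoo2 : Set.Ioo (0:ℝ) ε ⊆ Set.Ioc (0:ℝ) 1 := fun r hr => (hIoo hr).2
  have hIoo_mem : Set.Ioo (0:ℝ) ε ∈ nhdsWithin (0:ℝ) (Set.Ioi 0) :=
    Ioo_mem_nhdsGT_of_mem (by constructor <;> [norm_num; exact hεpos])
  -- sign dichotomy
  by_cases hpos : ∀ r ∈ Set.Ioo (0:ℝ) ε, 0 < f₀ r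
  · left
    refine habs.congr' ?_
    filter_upwards [hIoo_mem] with r hr
    exact abs_of_pos (hpos r hr)
  · right
    push_neg at hpos
    obtain ⟨a, ha, hfa⟩ := hpos
    have hfa' : f₀ a < 0 := by
      rcases lt_or_eq_of_le hfa with h | h
      · exact h
      · exfalso; have := hIoo1 a ha; rw [h] at this; norm_num at this
    have hneg : ∀ r ∈ Set.Ioo (0:ℝ) ε, f₀ r < 0 := by
      intro b hb
      by_contra hfb
      push_neg at hfb
      -- IVT gives a zero of f₀ in uIcc a b ⊆ Ioo 0 ε
      have hsub : Set.uIcc a b ⊆ Set.Ioo (0:ℝ) ε :=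
        (Set.ordConnected_Ioo).uIcc_subset ha hb
      have hcont : ContinuousOn f₀ (Set.uIcc a b) :=
        hcont₀.mono (hsub.trans hIoo2)
      have h0mem : (0:ℝ) ∈ Set.uIcc (f₀ a) (f₀ b) :=
        Set.mem_uIcc.mpr (Or.inl ⟨hfa'.le, hfb⟩)
      obtain ⟨c, hc, hfc⟩ := intermediate_value_uIcc hcont h0mem
      have := hIoo1 c (hsub hc)
      rw [hfc] at this
      norm_num at this
    have : Tendsto (fun r => -|f₀ r|) (nhdsWithin 0 (Set.Ioi 0)) (nhds (-1)) := habs.neg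
    refine this.congr' ?_
    filter_upwards [hIoo_mem] with r hr
    rw [abs_of_neg (hneg r hr), neg_neg]
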